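/- arXiv:2101.07184 — 3 statements merged into one kernel-verified Lean document; each statement's English description precedes it below -/
import Mathlib

section
/- Let W be an irreducible module over the Clifford algebra Cl^{n,n} of a real quadratic form of neutral signature (n,n), with n > 1. Suppose ⟨·,·⟩_W and ⟨·,·⟩'_W are two nonzero bilinear pairings on W each satisfying ⟨u·s, u·s̃⟩ = ⟨u,u⟩⟨s, s̃⟩ for all u ∈ ℝ^{n,n} and s, s̃ ∈ W. Then ⟨·,·⟩'_W = c·⟨·,·⟩_W for some nonzero constant c ∈ ℝ. -/
open CliffordAlgebra

set_option linter.unusedSectionVars false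
set_option linter.unusedVariables false

namespace PUaux

lemma swap3 {A : Type*} [Ring A] {a c : A} (h : a * c = -(c * a)) (x : A) :
    a * (c * x) = -(c * (a * x)) := by
  rw [← mul_assoc, h, neg_mul, mul_assoc]

lemma sq3 {A : Type*} [Ring A] {a : A} (h : a * a = 1) (x : A) : a * (a * x) = x := by
  rw [← mul_assoc, h, one_mul]

variable {V : Type*} [AddCommGroup V] [Module ℝ V] (Q : QuadraticForm ℝ V)
  {n : ℕ} (b : Module.Basis (Fin n ⊕ Fin n) ℝ V)

/-- shorthand for generators -/
noncomputable def g (j : Fin n ⊕ Fin n) : CliffordAlgebra Q := ι Q (b j)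

noncomputable def eA (i : Fin n) : CliffordAlgebra Q := g Q b (Sum.inl i)
noncomputable def fA (i : Fin n) : CliffordAlgebra Q := g Q b (Sum.inr i)
noncomputable def kA (i : Fin n) : CliffordAlgebra Q := eA Q b i * fA Q b i
noncomputable def eL (L : List (Fin n)) : CliffordAlgebra Q := (L.map (eA Q b)).prod

variable (hb1 : ∀ i, Q (b (Sum.inl i)) = 1) (hb2 : ∀ i, Q (b (Sum.inr i)) = -1)
  (hborth : ∀ j j', j ≠ j' → QuadraticMap.polar Q (b j) (b j') = 0)

include hborth in
lemma anticomm {j j' : Fin n ⊕ Fin n} (h : j ≠ j') :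
    g Q b j * g Q b j' = -(g Q b j' * g Q b j) := by
  rw [g, g, ι_mul_ι_comm, hborth _ _ h, map_zero, zero_sub]

include hb1 in
lemma e_sq (i : Fin n) : eA Q b i * eA Q b i = 1 := by
  rw [eA, g, ι_sq_scalar, hb1, map_one]

include hb2 in
lemma f_sq (i : Fin n) : fA Q b i * fA Q b i = -1 := by
  rw [fA, g, ι_sq_scalar, hb2]
  simp

include hborth in
lemma e_f_anti (i i' : Fin n) : eA Q b i * fA Q b i' = -(fA Q b i' * eA Q b i) :=
  anticomm Q b hborth (by simp)

include hborth in
lemma f_e_anti (i i' : Fin n) : fA Q b i' * eA Q b i = -(eA Q b i * fA Q b i') := by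
  rw [e_f_anti Q b hborth, neg_neg]

include hborth in
lemma e_e_anti {i i' : Fin n} (h : i ≠ i') : eA Q b i * eA Q b i' = -(eA Q b i' * eA Q b i) :=
  anticomm Q b hborth (by simpa using h)

include hborth in
lemma k_e_anti (i : Fin n) : kA Q b i * eA Q b i = -(eA Q b i * kA Q b i) := by
  rw [kA, mul_assoc, f_e_anti Q b hborth, mul_neg]

include hborth in
lemma f_f_anti {i i' : Fin n} (h : i ≠ i') : fA Q b i * fA Q b i' = -(fA Q b i' * fA Q b i) :=
  anticomm Q b hborth (by simpa using h)

include hborth in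
lemma k_e_comm {i j : Fin n} (h : j ≠ i) : Commute (kA Q b j) (eA Q b i) := by
  show _ = _
  rw [kA, mul_assoc, f_e_anti Q b hborth, mul_neg, swap3 (e_e_anti Q b hborth h) (fA Q b j),
    neg_neg]

include hborth in
lemma k_f_comm {i j : Fin n} (h : j ≠ i) : Commute (kA Q b j) (fA Q b i) := by
  show _ = _
  rw [kA, mul_assoc, f_f_anti Q b hborth h, mul_neg, swap3 (e_f_anti Q b hborth j i) (fA Q b j),
    neg_neg]

include hborth in
lemma k_k_comm (i j : Fin n) : Commute (kA Q b j) (kA Q b i) := by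
  rcases eq_or_ne j i with rfl | h
  · exact Commute.refl _
  · exact (k_e_comm Q b hborth h).mul_right (k_f_comm Q b hborth h)

include hb1 hb2 hborth in
lemma k_sq (i : Fin n) : kA Q b i * kA Q b i = 1 := by
  rw [kA, mul_assoc, swap3 (f_e_anti Q b hborth i i) (fA Q b i), mul_neg,
    sq3 (e_sq Q b hb1 i), f_sq Q b hb2, neg_neg]

lemma eL_nil : eL Q b [] = 1 := rfl
lemma eL_cons (x : Fin n) (L : List (Fin n)) :
    eL Q b (x :: L) = eA Q b x * eL Q b L := by simp [eL]
lemma eL_append (K L : List (Fin n)) : eL Q b (K ++ L) = eL Q b K * eL Q b L := by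
  simp [eL]

variable (hsq : ∀ i, eA Q b i * eA Q b i = 1)
  (hee : ∀ {i i' : Fin n}, i ≠ i' → eA Q b i * eA Q b i' = -(eA Q b i' * eA Q b i))

include hsq hee in
lemma step (j : Fin n) : ∀ {L : List (Fin n)}, L.Pairwise (· < ·) →
    ∃ c : ℝ, ∃ L' : List (Fin n), L'.Pairwise (· < ·) ∧ (∀ y ∈ L', y = j ∨ y ∈ L) ∧
      eA Q b j * eL Q b L = c • eL Q b L' := by
  intro L
  induction L with
  | nil =>
    intro _
    exact ⟨1, [j], by simp, by simp, by rw [one_smul, eL_cons, eL_nil]⟩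
  | cons x M ih =>
    intro hL
    rw [List.pairwise_cons] at hL
    rcases lt_trichotomy j x with hlt | rfl | hgt
    · refine ⟨1, j :: x :: M, ?_, ?_, by rw [one_smul]; simp [eL_cons]⟩
      · rw [List.pairwise_cons]
        refine ⟨?_, List.pairwise_cons.2 hL⟩
        intro y hy
        rcases List.mem_cons.1 hy with rfl | hy
        · exact hlt
        · exact hlt.trans (hL.1 y hy)
      · intro y hy
        rcases List.mem_cons.1 hy with rfl | hy
        · exact Or.inl rfl
        · exact Or.inr hy
    · refine ⟨1, M, hL.2, fun y hy => Or.inr (List.mem_cons_of_mem _ hy), ?_⟩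
      rw [one_smul, eL_cons, sq3 (hsq j)]
    · obtain ⟨c, L', hL', hsub, heq⟩ := ih hL.2
      refine ⟨-c, x :: L', ?_, ?_, ?_⟩
      · rw [List.pairwise_cons]
        refine ⟨?_, hL'⟩
        intro y hy
        rcases hsub y hy with rfl | hy
        · exact hgt
        · exact hL.1 y hy
      · intro y hy
        rcases List.mem_cons.1 hy with rfl | hy
        · exact Or.inr (List.mem_cons_self)
        · rcases hsub y hy with rfl | h'
          · exact Or.inl rfl
          · exact Or.inr (List.mem_cons_of_mem _ h')
      · rw [eL_cons, swap3 (hee (ne_of_gt hgt)), heq, eL_cons, mul_smul_comm, neg_smul]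

include hee in
lemma e_through (j : Fin n) : ∀ (L : List (Fin n)), j ∉ L →
    eL Q b L * eA Q b j = ((-1 : ℝ) ^ L.length) • (eA Q b j * eL Q b L) := by
  intro L
  induction L with
  | nil => simp [eL_nil]
  | cons x M ih =>
    intro hj
    have hjx : j ≠ x := fun h => hj (h ▸ List.mem_cons_self)
    have hjM : j ∉ M := fun h => hj (List.mem_cons_of_mem _ h)
    rw [eL_cons, mul_assoc, ih hjM, mul_smul_comm, swap3 (hee (Ne.symm hjx)),
      List.length_cons, pow_succ, mul_smul, neg_one_smul, smul_neg]

include hsq hee in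
lemma stepR (j : Fin n) : ∀ {L : List (Fin n)}, L.Pairwise (· < ·) →
    ∃ c : ℝ, ∃ L' : List (Fin n), L'.Pairwise (· < ·) ∧ (∀ y ∈ L', y = j ∨ y ∈ L) ∧
      eL Q b L * eA Q b j = c • eL Q b L' := by
  intro L
  induction L with
  | nil =>
    intro _
    exact ⟨1, [j], by simp, by simp, by rw [one_smul, eL_nil, eL_cons, eL_nil, one_mul, mul_one]⟩
  | cons x M ih =>
    intro hL
    rw [List.pairwise_cons] at hL
    rcases lt_trichotomy j x with hlt | rfl | hgt
    · have hjM : j ∉ x :: M := by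
        intro hmem
        rcases List.mem_cons.1 hmem with rfl | h
        · exact lt_irrefl j hlt
        · exact absurd hlt (not_lt.2 (le_of_lt (hL.1 j h)))
      refine ⟨(-1 : ℝ) ^ (x :: M).length, j :: x :: M, ?_, ?_, ?_⟩
      · rw [List.pairwise_cons]
        refine ⟨?_, List.pairwise_cons.2 hL⟩
        intro y hy
        rcases List.mem_cons.1 hy with rfl | hy
        · exact hlt
        · exact hlt.trans (hL.1 y hy)
      · intro y hy
        rcases List.mem_cons.1 hy with rfl | hy
        · exact Or.inl rfl
        · exact Or.inr hy
      · rw [e_through Q b hee j _ hjM]; simp [eL_cons]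
    · have hjM : j ∉ M := fun h => lt_irrefl j (hL.1 j h)
      refine ⟨(-1 : ℝ) ^ M.length, M, hL.2,
        fun y hy => Or.inr (List.mem_cons_of_mem _ hy), ?_⟩
      rw [eL_cons, mul_assoc, e_through Q b hee j _ hjM, mul_smul_comm, sq3 (hsq j)]
    · obtain ⟨c, L', hL', hsub, heq⟩ := ih hL.2
      refine ⟨c, x :: L', ?_, ?_, ?_⟩
      · rw [List.pairwise_cons]
        refine ⟨?_, hL'⟩
        intro y hy
        rcases hsub y hy with rfl | hy
        · exact hgt
        · exact hL.1 y hy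
      · intro y hy
        rcases List.mem_cons.1 hy with rfl | hy
        · exact Or.inr (List.mem_cons_self)
        · rcases hsub y hy with rfl | h'
          · exact Or.inl rfl
          · exact Or.inr (List.mem_cons_of_mem _ h')
      · rw [eL_cons, mul_assoc, heq, mul_smul_comm, eL_cons]

include hsq hee in
lemma red : ∀ (K : List (Fin n)) {L : List (Fin n)}, L.Pairwise (· < ·) →
    ∃ c : ℝ, ∃ L' : List (Fin n), L'.Pairwise (· < ·) ∧
      eL Q b K * eL Q b L = c • eL Q b L' := by
  intro K
  induction K with
  | nil => intro L hL; exact ⟨1, L, hL, by rw [one_smul, eL_nil, one_mul]⟩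
  | cons x M ih =>
    intro L hL
    obtain ⟨c, L', hL', heq⟩ := ih hL
    obtain ⟨c', L'', hL'', _, heq'⟩ := step Q b hsq hee x hL'
    refine ⟨c * c', L'', hL'', ?_⟩
    rw [eL_cons, mul_assoc, heq, mul_smul_comm, heq', smul_smul]

include hborth in
lemma f_through (j : Fin n) : ∀ (L : List (Fin n)),
    fA Q b j * eL Q b L = ((-1 : ℝ) ^ L.length) • (eL Q b L * fA Q b j) := by
  intro L
  induction L with
  | nil => simp [eL_nil]
  | cons x M ih =>
    rw [eL_cons, swap3 (f_e_anti Q b hborth x j) (eL Q b M), ih, mul_smul_comm,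
      List.length_cons, pow_succ, mul_smul, neg_one_smul, smul_neg, mul_assoc]

include hborth in
lemma k_through {i : Fin n} {L : List (Fin n)} (hi : i ∉ L) :
    Commute (kA Q b i) (eL Q b L) := by
  apply Commute.list_prod_right
  intro y hy
  obtain ⟨x, hx, rfl⟩ := List.mem_map.1 hy
  exact k_e_comm Q b hborth (fun h => hi (h ▸ hx))

section Module

variable {W : Type*} [AddCommGroup W] [Module ℝ W] [Module (CliffordAlgebra Q) W]
  [IsScalarTower ℝ (CliffordAlgebra Q) W]

include hb1 hborth in
lemma f_on_w0 {w₀ : W} (i : Fin n) (hw : kA Q b i • w₀ = w₀) :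
    fA Q b i • w₀ = eA Q b i • w₀ := by
  conv_rhs => rw [← hw]
  rw [← mul_smul, kA, ← mul_assoc, e_sq Q b hb1, one_mul]

include hb1 hb2 hborth in
lemma exists_w0 [Nontrivial W] : ∃ w : W, w ≠ 0 ∧ ∀ i : Fin n, kA Q b i • w = w := by
  suffices h : ∀ m : ℕ, ∃ w : W, w ≠ 0 ∧ ∀ i : Fin n, (i : ℕ) < m → kA Q b i • w = w by
    obtain ⟨w, h1, h2⟩ := h n
    exact ⟨w, h1, fun i => h2 i i.isLt⟩
  intro m
  induction m with
  | zero =>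
    obtain ⟨w, hw⟩ := exists_ne (0 : W)
    exact ⟨w, hw, fun i hi => absurd hi (Nat.not_lt_zero _)⟩
  | succ m ih =>
    obtain ⟨w, hw0, hwfix⟩ := ih
    by_cases hm : m < n
    · set i₀ : Fin n := ⟨m, hm⟩ with hi₀
      have hsplit : ∀ i : Fin n, (i : ℕ) < m + 1 → i = i₀ ∨ (i : ℕ) < m := by
        intro i hi
        rcases Nat.lt_succ_iff_lt_or_eq.1 hi with h | h
        · exact Or.inr h
        · exact Or.inl (Fin.ext h)
      by_cases hz : w + kA Q b i₀ • w = 0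
      · have hkw : kA Q b i₀ • w = -w := by
          rw [eq_neg_iff_add_eq_zero, add_comm]; exact hz
        refine ⟨eA Q b i₀ • w, ?_, ?_⟩
        · intro h0
          apply hw0
          have h1 : eA Q b i₀ • eA Q b i₀ • w = eA Q b i₀ • (0 : W) := by rw [h0]
          rwa [← mul_smul, e_sq Q b hb1, one_smul, smul_zero] at h1
        · intro i hi
          rcases hsplit i hi with rfl | hi'
          · rw [← mul_smul, k_e_anti Q b hborth, neg_smul, mul_smul, hkw, smul_neg, neg_neg]
          · have hne : i ≠ i₀ := by
              intro h; rw [h] at hi'; exact absurd hi' (lt_irrefl m)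
            rw [← mul_smul, (k_e_comm Q b hborth hne).eq, mul_smul, hwfix i hi']
      · refine ⟨w + kA Q b i₀ • w, hz, ?_⟩
        intro i hi
        rcases hsplit i hi with rfl | hi'
        · rw [smul_add, ← mul_smul, k_sq Q b hb1 hb2 hborth, one_smul, add_comm]
        · have hne : i ≠ i₀ := by
            intro h; rw [h] at hi'; exact absurd hi' (lt_irrefl m)
          rw [smul_add, hwfix i hi', ← mul_smul, (k_k_comm Q b hborth i₀ i).eq,
            mul_smul, hwfix i hi']
    · have hall : ∀ i : Fin n, (i : ℕ) < m := fun i => lt_of_lt_of_le i.isLt (not_lt.1 hm)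
      exact ⟨w, hw0, fun i _ => hwfix i (hall i)⟩

/-- generating vectors indexed by finsets -/
noncomputable def gS (w₀ : W) (T : Finset (Fin n)) : W :=
  eL Q b (T.sort (· ≤ ·)) • w₀

lemma sort_pairwise (T : Finset (Fin n)) : (T.sort (· ≤ ·)).Pairwise (· < ·) :=
  List.sortedLT_iff_pairwise.1 T.sortedLT_sort

lemma mem_S {L : List (Fin n)} (hL : L.Pairwise (· < ·)) (w₀ : W) :
    eL Q b L • w₀ ∈ Set.range (gS Q b w₀) := by
  refine ⟨L.toFinset, ?_⟩
  rw [gS, (List.toFinset_sort (· ≤ ·) (hL.imp ne_of_lt)).2 (hL.imp le_of_lt)]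

include hb1 hb2 hborth in
lemma span_top [IsSimpleModule (CliffordAlgebra Q) W] {w₀ : W} (hw0 : w₀ ≠ 0)
    (hfix : ∀ i : Fin n, kA Q b i • w₀ = w₀) :
    Submodule.span ℝ (Set.range (gS Q b w₀)) = ⊤ := by
  set Sp := Submodule.span ℝ (Set.range (gS Q b w₀)) with hSp
  have hgen : ∀ (j : Fin n ⊕ Fin n), ∀ x ∈ Sp, g Q b j • x ∈ Sp := by
    intro j
    have hmap : ∀ y ∈ Set.range (gS Q b w₀), g Q b j • y ∈ Sp := by
      rintro y ⟨T, rfl⟩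
      rw [gS, ← mul_smul]
      match j with
      | Sum.inl i =>
        obtain ⟨c, L', hL', _, heq⟩ :=
          step Q b (e_sq Q b hb1) (fun h => e_e_anti Q b hborth h) i (sort_pairwise T)
        rw [show g Q b (Sum.inl i) = eA Q b i from rfl, heq, smul_assoc]
        exact Sp.smul_mem c (Submodule.subset_span (mem_S Q b hL' w₀))
      | Sum.inr i =>
        rw [show g Q b (Sum.inr i) = fA Q b i from rfl,
          f_through Q b hborth i (T.sort (· ≤ ·)), smul_assoc, mul_smul,
          f_on_w0 Q b hb1 hborth i (hfix i), ← mul_smul]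
        obtain ⟨c, L', hL', _, heq⟩ :=
          stepR Q b (e_sq Q b hb1) (fun h => e_e_anti Q b hborth h) i (sort_pairwise T)
        rw [heq, smul_assoc]
        exact Sp.smul_mem _ (Sp.smul_mem c (Submodule.subset_span (mem_S Q b hL' w₀)))
    intro x hx
    -- the ℝ-linear action map
    let act : W →ₗ[ℝ] W :=
      { toFun := fun y => g Q b j • y
        map_add' := fun y z => smul_add _ y z
        map_smul' := fun c y => smul_comm (g Q b j) c y }
    have : Sp ≤ Sp.comap act := by
      rw [hSp]
      exact Submodule.span_le.2 hmap
    exact this hx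
  have hsmul : ∀ (a : CliffordAlgebra Q), ∀ x ∈ Sp, a • x ∈ Sp := by
    intro a
    induction a using CliffordAlgebra.induction with
    | algebraMap r => intro x hx; rw [algebraMap_smul]; exact Sp.smul_mem r hx
    | ι v =>
      intro x hx
      have hv : ι Q v = ∑ j, (b.repr v) j • g Q b j := by
        conv_lhs => rw [← b.sum_repr v]
        rw [map_sum]
        simp [g]
      rw [hv, Finset.sum_smul]
      refine Sp.sum_mem fun j _ => ?_
      rw [smul_assoc]
      exact Sp.smul_mem _ (hgen j x hx)
    | mul a₁ a₂ h1 h2 => intro x hx; rw [mul_smul]; exact h1 _ (h2 _ hx)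
    | add a₁ a₂ h1 h2 => intro x hx; rw [add_smul]; exact Sp.add_mem (h1 _ hx) (h2 _ hx)
  let N : Submodule (CliffordAlgebra Q) W :=
    { carrier := Sp
      add_mem' := fun h1 h2 => Sp.add_mem h1 h2
      zero_mem' := Sp.zero_mem
      smul_mem' := fun a x hx => hsmul a x hx }
  have hw0mem : w₀ ∈ N := by
    have : eL Q b ([] : List (Fin n)) • w₀ ∈ Set.range (gS Q b w₀) := mem_S Q b (by simp) w₀
    rw [eL_nil, one_smul] at this
    exact Submodule.subset_span this
  have hN : N = ⊤ := by
    rcases eq_bot_or_eq_top N with h | h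
    · exfalso; rw [h] at hw0mem; exact hw0 hw0mem
    · exact h
  rw [eq_top_iff]
  intro x _
  have : x ∈ N := hN ▸ Submodule.mem_top
  exact this

section Compat

variable (C : LinearMap.BilinForm ℝ W)
  (hC : ∀ (u : V) (s t : W), C (ι Q u • s) (ι Q u • t) = Q u * C s t)

include hC in
lemma adj_step {u : V} (hu : Q u ≠ 0) (s t : W) :
    C (ι Q u • s) t = C s (ι Q u • t) := by
  have h := hC u s (ι Q u • t)
  rw [← mul_smul, ι_sq_scalar, algebraMap_smul, map_smul, smul_eq_mul] at h
  exact mul_left_cancel₀ hu h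

include hb1 hC in
lemma peel : ∀ (K : List (Fin n)) (s t : W),
    C (eL Q b K • s) t = C s (eL Q b K.reverse • t) := by
  intro K
  induction K with
  | nil => intro s t; rw [eL_nil, List.reverse_nil, eL_nil, one_smul, one_smul]
  | cons x M ih =>
    intro s t
    have hQx : Q (b (Sum.inl x)) ≠ 0 := by rw [hb1]; norm_num
    rw [eL_cons, mul_smul]
    rw [show eA Q b x = ι Q (b (Sum.inl x)) from rfl]
    rw [adj_step Q C hC hQx, ih, List.reverse_cons, eL_append, mul_smul, eL_cons, eL_nil,
      mul_one]
    rfl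

include hb1 hb2 hC in
lemma flip (i : Fin n) (v w : W) : C (kA Q b i • v) (kA Q b i • w) = -(C v w) := by
  rw [kA, mul_smul, mul_smul]
  rw [show eA Q b i = ι Q (b (Sum.inl i)) from rfl, show fA Q b i = ι Q (b (Sum.inr i)) from rfl]
  rw [hC, hC, hb1, hb2]
  ring

include hb1 hb2 hborth hC in
lemma vanish {w₀ : W} (hfix : ∀ i : Fin n, kA Q b i • w₀ = w₀) {L : List (Fin n)}
    (hne : L.toFinset ≠ Finset.univ) :
    C w₀ (eL Q b L • w₀) = 0 := by
  obtain ⟨i, hi⟩ : ∃ i : Fin n, i ∉ L := by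
    by_contra h
    push_neg at h
    exact hne (Finset.eq_univ_iff_forall.2 fun i => List.mem_toFinset.2 (h i))
  have h1 : kA Q b i • (eL Q b L • w₀) = eL Q b L • w₀ := by
    rw [← mul_smul, (k_through Q b hborth hi).eq, mul_smul, hfix i]
  have h2 := flip Q b hb1 hb2 C hC i w₀ (eL Q b L • w₀)
  rw [hfix i, h1] at h2
  linarith

include hb1 hb2 hborth in
lemma value {w₀ : W} (hfix : ∀ i : Fin n, kA Q b i • w₀ = w₀) (T T' : Finset (Fin n)) :
    ∃ r : ℝ, ∀ (C : LinearMap.BilinForm ℝ W),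
      (∀ (u : V) (s t : W), C (ι Q u • s) (ι Q u • t) = Q u * C s t) →
      C (gS Q b w₀ T) (gS Q b w₀ T') = r * C w₀ (gS Q b w₀ Finset.univ) := by
  obtain ⟨c, L', hL', heq⟩ := red Q b (e_sq Q b hb1) (fun h => e_e_anti Q b hborth h)
      ((T.sort (· ≤ ·)).reverse) (sort_pairwise T')
  have hval : ∀ (C : LinearMap.BilinForm ℝ W),
      (∀ (u : V) (s t : W), C (ι Q u • s) (ι Q u • t) = Q u * C s t) →
      C (gS Q b w₀ T) (gS Q b w₀ T') = c * C w₀ (eL Q b L' • w₀) := by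
    intro C hC
    rw [gS, gS, peel Q b hb1 C hC, ← mul_smul, heq, smul_assoc, map_smul, smul_eq_mul]
  by_cases hu : L'.toFinset = Finset.univ
  · refine ⟨c, fun C hC => ?_⟩
    rw [hval C hC]
    have hL'eq : Finset.univ.sort (· ≤ ·) = L' := by
      rw [← hu]
      exact (List.toFinset_sort (· ≤ ·) (hL'.imp ne_of_lt)).2 (hL'.imp le_of_lt)
    rw [gS, hL'eq]
  · refine ⟨0, fun C hC => ?_⟩
    rw [hval C hC, vanish Q b hb1 hb2 hborth C hC hfix hu, mul_zero, zero_mul]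

lemma exists_nonzero_pair {w₀ : W} (hspan : Submodule.span ℝ (Set.range (gS Q b w₀)) = ⊤)
    {C : LinearMap.BilinForm ℝ W} (hCne : C ≠ 0) :
    ∃ T T' : Finset (Fin n), C (gS Q b w₀ T) (gS Q b w₀ T') ≠ 0 := by
  by_contra h
  push_neg at h
  apply hCne
  have h1 : ∀ T, C (gS Q b w₀ T) = 0 := by
    intro T
    apply LinearMap.ext_on hspan
    rintro x ⟨T', rfl⟩
    exact h T T'
  apply LinearMap.ext_on hspan
  rintro x ⟨T, rfl⟩
  rw [h1 T]
  rfl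

end Compat

end Module

lemma wss_single {ι : Type*} [Fintype ι] [DecidableEq ι] (w : ι → ℝ) (j : ι) :
    QuadraticMap.weightedSumSquares ℝ w (Pi.single j 1) = w j := by
  rw [QuadraticMap.weightedSumSquares_apply]
  rw [Finset.sum_eq_single j]
  · simp
  · intro i _ hij
    simp [Pi.single_eq_of_ne hij]
  · intro h
    exact absurd (Finset.mem_univ j) h

lemma wss_pair {ι : Type*} [Fintype ι] [DecidableEq ι] (w : ι → ℝ) {j j' : ι} (h : j ≠ j') :
    QuadraticMap.weightedSumSquares ℝ w (Pi.single j 1 + Pi.single j' 1) = w j + w j' := by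
  rw [QuadraticMap.weightedSumSquares_apply,
    ← Finset.sum_subset (Finset.subset_univ ({j, j'} : Finset ι)) (by
      intro x _ hx
      simp only [Finset.mem_insert, Finset.mem_singleton] at hx
      push_neg at hx
      simp [Pi.single_eq_of_ne hx.1, Pi.single_eq_of_ne hx.2]),
    Finset.sum_pair h]
  simp [Pi.single_eq_of_ne h, Pi.single_eq_of_ne (Ne.symm h)]

end PUaux



open PUaux


/-- Let `W` be an irreducible module over the Clifford algebra `Cl^{n,n}` of a
real quadratic form of neutral signature `(n,n)`, with `n > 1`.  Any two nonzero bilinear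
pairings on `W` compatible with Clifford multiplication (`⟨u·s, u·s̃⟩ = ⟨u,u⟩⟨s,s̃⟩` for all
vectors `u`) differ by a nonzero real constant. -/
theorem pairing_unique_up_to_scalar {V : Type*} [AddCommGroup V] [Module ℝ V]
    (n : ℕ) (hn : 1 < n) (Q : QuadraticForm ℝ V)
    (hQ : QuadraticMap.Equivalent Q
      (QuadraticMap.weightedSumSquares ℝ
        (Sum.elim (fun _ : Fin n => (1 : ℝ)) (fun _ : Fin n => (-1 : ℝ)))))
    (W : Type*) [AddCommGroup W] [Module ℝ W] [Module (CliffordAlgebra Q) W]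
    [IsScalarTower ℝ (CliffordAlgebra Q) W] [IsSimpleModule (CliffordAlgebra Q) W]
    (B B' : LinearMap.BilinForm ℝ W) (hB : B ≠ 0) (hB' : B' ≠ 0)
    (hBcompat : ∀ (u : V) (s t : W), B (ι Q u • s) (ι Q u • t) = Q u * B s t)
    (hB'compat : ∀ (u : V) (s t : W), B' (ι Q u • s) (ι Q u • t) = Q u * B' s t) :
    ∃ c : ℝ, c ≠ 0 ∧ B' = c • B := by
  classical
  obtain ⟨φ0⟩ := hQ
  set Qw : (Fin n ⊕ Fin n) → ℝ := Sum.elim (fun _ => 1) (fun _ => -1) with hQw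
  let φ := φ0.symm
  let b : Module.Basis (Fin n ⊕ Fin n) ℝ V := (Pi.basisFun ℝ (Fin n ⊕ Fin n)).map φ.toLinearEquiv
  have hbdef : ∀ j, b j = φ (Pi.single j 1) := by
    intro j
    simp [b, Module.Basis.map_apply]
  have hQφ : ∀ x, Q (φ x) = QuadraticMap.weightedSumSquares ℝ Qw x := φ.map_app
  have hb1 : ∀ i, Q (b (Sum.inl i)) = 1 := by
    intro i
    rw [hbdef, hQφ, wss_single, hQw, Sum.elim_inl]
  have hb2 : ∀ i, Q (b (Sum.inr i)) = -1 := by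
    intro i
    rw [hbdef, hQφ, wss_single, hQw, Sum.elim_inr]
  have haddφ : ∀ x y : (Fin n ⊕ Fin n) → ℝ, φ (x + y) = φ x + φ y := fun x y =>
    map_add φ.toLinearEquiv x y
  have hborth : ∀ j j', j ≠ j' → QuadraticMap.polar Q (b j) (b j') = 0 := by
    intro j j' hjj
    rw [hbdef, hbdef]
    simp only [QuadraticMap.polar]
    rw [← haddφ, hQφ, hQφ, hQφ, wss_pair Qw hjj, wss_single, wss_single]
    ring
  haveI : Nontrivial W := IsSimpleModule.nontrivial (CliffordAlgebra Q) W
  obtain ⟨w₀, hw0, hfix⟩ := exists_w0 Q b hb1 hb2 hborth (W := W)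
  have hspan := span_top Q b hb1 hb2 hborth hw0 hfix
  obtain ⟨T₀, T₀', hTn0⟩ := exists_nonzero_pair Q b hspan hB
  obtain ⟨r₀, hr₀⟩ := value Q b hb1 hb2 hborth hfix T₀ T₀'
  set x0 := gS Q b w₀ Finset.univ with hx0
  have hBx : B w₀ x0 ≠ 0 := by
    intro h0
    apply hTn0
    rw [hr₀ B hBcompat, h0, mul_zero]
  set c := B' w₀ x0 / B w₀ x0 with hc
  have hcB : B' w₀ x0 = c * B w₀ x0 := by
    rw [hc, div_mul_cancel₀ _ hBx]
  have hkey : ∀ T T', B' (gS Q b w₀ T) (gS Q b w₀ T') = c * B (gS Q b w₀ T) (gS Q b w₀ T') := by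
    intro T T'
    obtain ⟨r, hr⟩ := value Q b hb1 hb2 hborth hfix T T'
    rw [hr B' hB'compat, hr B hBcompat, hcB]
    ring
  have hBB : B' = c • B := by
    apply LinearMap.ext_on hspan
    rintro x ⟨T, rfl⟩
    apply LinearMap.ext_on hspan
    rintro y ⟨T', rfl⟩
    simp only [LinearMap.smul_apply, smul_eq_mul]
    exact hkey T T'
  have hcne : c ≠ 0 := by
    intro h0
    apply hB'
    rw [hBB, h0, zero_smul]
  exact ⟨c, hcne, hBB⟩
end

section
/- Let W be an irreducible Cl^{n,n}-module with n > 1, and let ⟨·,·⟩ be a bilinear pairing on W satisfying ⟨u·s, u·s̃⟩ = ⟨u,u⟩⟨s,s̃⟩ for all u ∈ ℝ^{n,n}. Choose v ∈ ℝ^{n,n} with ⟨v,v⟩ = 1 and a basis of W of the form (w_1, …, w_{r/2}, v·w_1, …, v·w_{r/2}), where r = dim W = 2^n. Then the Gram determinant of ⟨·,·⟩ in this basis is a perfect square; in particular it is nonnegative. For n = 1 the Gram determinant is minus a perfect square, hence nonpositive. -/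
open CliffordAlgebra

/-- Let `W` be an irreducible `Cl^{n,n}`-module, `⟨·,·⟩` a nonzero bilinear
pairing compatible with Clifford multiplication, `v` a vector with `⟨v,v⟩ = 1` and
`(w_1, …, w_{r/2}, v·w_1, …, v·w_{r/2})` a basis of `W` (`r = dim W = 2^n`).  Then for `n > 1`
the Gram determinant of `⟨·,·⟩` in this basis is a perfect square (in particular nonnegative),
while for `n = 1` it is minus a perfect square (hence nonpositive). -/
theorem gram_det_is_square {V : Type*} [AddCommGroup V] [Module ℝ V]
    (n : ℕ) (Q : QuadraticForm ℝ V)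
    (hQ : QuadraticMap.Equivalent Q
      (QuadraticMap.weightedSumSquares ℝ
        (Sum.elim (fun _ : Fin n => (1 : ℝ)) (fun _ : Fin n => (-1 : ℝ)))))
    (W : Type*) [AddCommGroup W] [Module ℝ W] [Module (CliffordAlgebra Q) W]
    [IsScalarTower ℝ (CliffordAlgebra Q) W] [IsSimpleModule (CliffordAlgebra Q) W]
    (hdim : Module.finrank ℝ W = 2 ^ n)
    (B : LinearMap.BilinForm ℝ W) (hB : B ≠ 0)
    (hBcompat : ∀ (u : V) (s t : W), B (ι Q u • s) (ι Q u • t) = Q u * B s t)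
    (v : V) (hv : Q v = 1)
    (w : Fin (2 ^ (n - 1)) → W) (bas : Module.Basis (Fin (2 ^ (n - 1)) ⊕ Fin (2 ^ (n - 1))) ℝ W)
    (hbas₁ : ∀ i, bas (Sum.inl i) = w i)
    (hbas₂ : ∀ i, bas (Sum.inr i) = ι Q v • w i) :
    (1 < n → ∃ d : ℝ, (Matrix.of fun i j => B (bas i) (bas j)).det = d ^ 2 ∧
        0 ≤ (Matrix.of fun i j => B (bas i) (bas j)).det) ∧
    (n = 1 → ∃ d : ℝ, (Matrix.of fun i j => B (bas i) (bas j)).det = -(d ^ 2) ∧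
        (Matrix.of fun i j => B (bas i) (bas j)).det ≤ 0) := by
  classical
  obtain ⟨f⟩ := hQ
  -- ### Construction of a vector `u` with `Q u = -1` orthogonal to `v`
  set WSS := QuadraticMap.weightedSumSquares ℝ
      (Sum.elim (fun _ : Fin n => (1 : ℝ)) (fun _ : Fin n => (-1 : ℝ))) with hW
  have key : ∀ x : Fin n ⊕ Fin n → ℝ,
      WSS x = (∑ i : Fin n, x (Sum.inl i) * x (Sum.inl i))
        - ∑ i : Fin n, x (Sum.inr i) * x (Sum.inr i) := by
    intro x
    rw [hW, QuadraticMap.weightedSumSquares_apply, Fintype.sum_sum_type]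
    simp [sub_eq_add_neg, Finset.sum_neg_distrib]
  set g : Fin n ⊕ Fin n → ℝ := fun p => f v p.swap with hg
  set u : V := f.toLinearEquiv.symm g with hu
  have hfu : f u = g := f.toLinearEquiv.apply_symm_apply g
  have hQv' : WSS (f v) = 1 := by rw [f.map_app v]; exact hv
  have hQu : Q u = -1 := by
    rw [← f.map_app u, hfu, key]
    rw [key] at hQv'
    simp only [hg, Sum.swap_inl, Sum.swap_inr]
    linarith [hQv']
  have hpol : Q (v + u) = Q v + Q u := by
    have hQvu : Q (v + u) = 0 := by
      rw [← f.map_app (v + u), map_add, hfu, key]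
      apply sub_eq_zero.mpr
      apply Finset.sum_congr rfl
      intro i _
      simp only [Pi.add_apply, hg, Sum.swap_inl, Sum.swap_inr]
      ring
    rw [hQvu, hv, hQu]; ring
  have horth : ι Q v * ι Q u = -(ι Q u * ι Q v) :=
    CliffordAlgebra.ι_mul_ι_comm_of_isOrtho hpol
  -- ### basic `smul` facts
  have smulc : ∀ (x : CliffordAlgebra Q) (r : ℝ) (s : W), x • (r • s) = r • (x • s) := by
    intro x r s
    rw [algebra_compatible_smul (CliffordAlgebra Q) r s, smul_smul,
      algebra_compatible_smul (CliffordAlgebra Q) r (x • s), smul_smul,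
      (Algebra.commutes r x).symm]
  have hvv : ∀ s : W, ι Q v • ι Q v • s = s := by
    intro s
    rw [smul_smul, ι_sq_scalar, hv, map_one, one_smul]
  have huu : ∀ s : W, ι Q u • ι Q u • s = -s := by
    intro s
    rw [smul_smul, ι_sq_scalar, hQu, map_neg, map_one, neg_smul, one_smul]
  have hvu : ∀ s : W, ι Q v • ι Q u • s = -(ι Q u • ι Q v • s) := by
    intro s
    rw [smul_smul, horth, neg_smul, smul_smul]
  have hBv : ∀ s t : W, B (ι Q v • s) (ι Q v • t) = B s t := by
    intro s t; rw [hBcompat, hv, one_mul]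
  have hBu : ∀ s t : W, B (ι Q u • s) (ι Q u • t) = -B s t := by
    intro s t; rw [hBcompat, hQu]; ring
  -- ### the new basis
  have main : 1 ≤ n → ∃ d : ℝ,
      (Matrix.of fun i j => B (bas i) (bas j)).det = (-1 : ℝ) ^ (2 ^ (n - 1)) * d ^ 2 := by
    intro hn
    haveI : Nonempty (Fin (2 ^ (n - 1))) := ⟨⟨0, Nat.pow_pos (by norm_num)⟩⟩
    set s : Fin (2 ^ (n - 1)) → W := fun i => w i + ι Q v • w i with hs
    set t : Fin (2 ^ (n - 1)) → W := fun i => ι Q u • s i with ht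
    have hvs : ∀ i, ι Q v • s i = s i := by
      intro i
      rw [hs]
      simp only []
      rw [smul_add, hvv]
      abel
    have hvt : ∀ i, ι Q v • t i = -t i := by
      intro i; rw [ht]; simp only []; rw [hvu, hvs]
    have hut : ∀ i, ι Q u • t i = -s i := fun i => huu (s i)
    have hkey : ∀ a : Fin (2 ^ (n - 1)) → ℝ, ∑ i, a i • s i = 0 → ∀ i, a i = 0 := by
      intro a ha
      have hexp : ∑ p : Fin (2 ^ (n - 1)) ⊕ Fin (2 ^ (n - 1)), Sum.elim a a p • bas p = 0 := by
        rw [Fintype.sum_sum_type]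
        simp only [Sum.elim_inl, Sum.elim_inr, hbas₁, hbas₂]
        rw [← Finset.sum_add_distrib]
        rw [← ha]
        apply Finset.sum_congr rfl
        intro i _
        rw [hs]
        simp only []
        rw [smul_add]
      have h0 := Fintype.linearIndependent_iff.mp bas.linearIndependent (Sum.elim a a) hexp
      intro i; exact h0 (Sum.inl i)
    set c : Fin (2 ^ (n - 1)) ⊕ Fin (2 ^ (n - 1)) → W := Sum.elim s t with hc
    have hLI : LinearIndependent ℝ c := by
      rw [Fintype.linearIndependent_iff]
      intro gg hgg
      rw [Fintype.sum_sum_type] at hgg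
      simp only [hc, Sum.elim_inl, Sum.elim_inr] at hgg
      have hgg2 : (∑ i, gg (Sum.inl i) • s i) - ∑ i, gg (Sum.inr i) • t i = 0 := by
        have h2 := congrArg (fun x => ι Q v • x) hgg
        simp only [smul_add, smul_zero, Finset.smul_sum] at h2
        calc (∑ i, gg (Sum.inl i) • s i) - ∑ i, gg (Sum.inr i) • t i
            = (∑ i, ι Q v • (gg (Sum.inl i) • s i))
              + ∑ i, ι Q v • (gg (Sum.inr i) • t i) := by
              rw [sub_eq_add_neg, ← Finset.sum_neg_distrib]
              congr 1
              · exact (Finset.sum_congr rfl fun i _ => by rw [smulc, hvs]).symm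
              · exact (Finset.sum_congr rfl fun i _ => by rw [smulc, hvt, smul_neg]).symm
          _ = 0 := h2
      have hT : (∑ i, gg (Sum.inr i) • t i) = 0 := by
        have h3 : (2 : ℝ) • (∑ i, gg (Sum.inr i) • t i) = 0 := by
          rw [two_smul]
          calc (∑ i, gg (Sum.inr i) • t i) + ∑ i, gg (Sum.inr i) • t i
              = ((∑ i, gg (Sum.inl i) • s i) + ∑ i, gg (Sum.inr i) • t i)
                - ((∑ i, gg (Sum.inl i) • s i) - ∑ i, gg (Sum.inr i) • t i) := by abel
            _ = 0 := by rw [hgg, hgg2]; abel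
        have := smul_eq_zero.mp h3
        rcases this with h | h
        · exact absurd h (by norm_num)
        · exact h
      have hS : (∑ i, gg (Sum.inl i) • s i) = 0 := by
        have := hgg
        rw [hT, add_zero] at this
        exact this
      have hinl : ∀ i, gg (Sum.inl i) = 0 := hkey _ hS
      have hinr : ∀ i, gg (Sum.inr i) = 0 := by
        have h4 := congrArg (fun x => ι Q u • x) hT
        simp only [smul_zero, Finset.smul_sum] at h4
        have h5 : (∑ i, gg (Sum.inr i) • (-s i)) = 0 := by
          rw [← h4]
          apply Finset.sum_congr rfl
          intro i _
          rw [smulc, hut]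
        have h6 : (∑ i, (-(gg (Sum.inr i))) • s i) = 0 := by
          rw [← h5]
          apply Finset.sum_congr rfl
          intro i _
          rw [smul_neg, neg_smul]
        intro i
        have := hkey _ h6 i
        linarith
      rintro (i | i)
      · exact hinl i
      · exact hinr i
    have hcard : Fintype.card (Fin (2 ^ (n - 1)) ⊕ Fin (2 ^ (n - 1))) = Module.finrank ℝ W := by
      rw [hdim]
      simp only [Fintype.card_sum, Fintype.card_fin]
      rw [← two_mul, ← pow_succ']
      congr 1
      omega
    set b2 : Module.Basis (Fin (2 ^ (n - 1)) ⊕ Fin (2 ^ (n - 1))) ℝ W :=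
      basisOfLinearIndependentOfCardEqFinrank hLI hcard with hb2
    have hb2' : ∀ p, b2 p = c p := fun p => by
      rw [hb2, coe_basisOfLinearIndependentOfCardEqFinrank]
    set M : Matrix (Fin (2 ^ (n - 1)) ⊕ Fin (2 ^ (n - 1)))
        (Fin (2 ^ (n - 1)) ⊕ Fin (2 ^ (n - 1))) ℝ :=
      Matrix.of fun p q => B (bas p) (bas q) with hM
    have hMeq : LinearMap.BilinForm.toMatrix bas B = M := by
      ext p q
      rw [LinearMap.BilinForm.toMatrix_apply]
      rfl
    set G : Matrix (Fin (2 ^ (n - 1))) (Fin (2 ^ (n - 1))) ℝ :=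
      Matrix.of fun i j => B (s i) (s j) with hG
    have hM2 : LinearMap.BilinForm.toMatrix b2 B = Matrix.fromBlocks G 0 0 (-G) := by
      ext p q
      rw [LinearMap.BilinForm.toMatrix_apply, hb2', hb2']
      rcases p with i | i <;> rcases q with j | j
      · simp [hc, hG]
      · simp only [hc, Sum.elim_inl, Sum.elim_inr, Matrix.fromBlocks_apply₁₂,
          Matrix.zero_apply]
        have h := hBv (s i) (t j)
        rw [hvs, hvt, map_neg] at h
        linarith
      · simp only [hc, Sum.elim_inl, Sum.elim_inr, Matrix.fromBlocks_apply₂₁,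
          Matrix.zero_apply]
        have h := hBv (t i) (s j)
        rw [hvs, hvt, map_neg, LinearMap.neg_apply] at h
        linarith
      · simp only [hc, Sum.elim_inr, Matrix.fromBlocks_apply₂₂, Matrix.neg_apply, ht]
        rw [hBu]
        simp [hG]
    set Pm := bas.toMatrix b2 with hPm
    have hchange : Pm.transpose * LinearMap.BilinForm.toMatrix bas B * Pm = LinearMap.BilinForm.toMatrix b2 B :=
      LinearMap.BilinForm.toMatrix_mul_basis_toMatrix bas b2 B
    have hPmunit : Pm.det * (b2.toMatrix bas).det = 1 := by
      rw [← Matrix.det_mul, Module.Basis.toMatrix_mul_toMatrix_flip, Matrix.det_one]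
    have hPmne : Pm.det ≠ 0 := by
      intro h0
      rw [h0, zero_mul] at hPmunit
      norm_num at hPmunit
    have hdet : Pm.det * M.det * Pm.det
        = G.det * ((-1 : ℝ) ^ (2 ^ (n - 1)) * G.det) := by
      have := congrArg Matrix.det hchange
      rw [hMeq, hM2] at this
      rw [Matrix.det_mul, Matrix.det_mul, Matrix.det_transpose] at this
      rw [this, Matrix.det_fromBlocks_zero₂₁, Matrix.det_neg, Fintype.card_fin]
    refine ⟨G.det / Pm.det, ?_⟩
    field_simp
    linear_combination hdet
  -- ### conclude
  constructor
  · intro h1n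
    obtain ⟨d, hd⟩ := main (le_of_lt h1n)
    have heven : Even (2 ^ (n - 1)) := by
      refine (Nat.even_pow).mpr ⟨even_iff_two_dvd.mpr dvd_rfl, by omega⟩
    rw [heven.neg_one_pow, one_mul] at hd
    exact ⟨d, hd, by rw [hd]; positivity⟩
  · intro h1
    obtain ⟨d, hd⟩ := main (le_of_eq h1.symm)
    subst h1
    norm_num at hd
    exact ⟨d, hd, by rw [hd]; nlinarith [sq_nonneg d]⟩
end

section
/- Let I_1: E_1 → E_2 and I_2: E_2 → E_3 be fiber-preserving isomorphisms of standard Courant algebroid data over a manifold M, where E_i = T*M ⊕ 𝒢_i ⊕ TM, with I_1 determined by (β_1, K_1, Φ_1) and I_2 by (β_2, K_2, Φ_2) via the formula I(η) = η, I(r) = −2Φ*K(r) + K(r), I(X) = i_X β − Φ*Φ(X) + Φ(X) + X. Then the composition I_2 ∘ I_1 is determined by (β_3, K_3, Φ_3) with K_3 = K_2 K_1, Φ_3 = Φ_2 + K_2 Φ_1, and β_3(X,Y) = (β_1 + β_2)(X,Y) + ⟨Φ_2(X), K_2 Φ_1(Y)⟩ − ⟨Φ_2(Y), K_2 Φ_1(X)⟩.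 -/
/-- The fiberwise model of a fiber-preserving isomorphism of standard Courant algebroids
`T*M ⊕ 𝒢 ⊕ TM → T*M ⊕ 𝒢' ⊕ TM` determined by data `(β, K, Φ)`:
`I(η, r, X) = (η − 2⟨K r, Φ ·⟩ + β(X, ·) − ⟨Φ X, Φ ·⟩, K r + Φ X, X)`,
where `g = ⟨·,·⟩` is the scalar product on the target `𝒢' = W'`. -/
noncomputable def stdCourantMap {V W W' : Type*} [AddCommGroup V] [Module ℝ V]
    [AddCommGroup W] [Module ℝ W] [AddCommGroup W'] [Module ℝ W']
    (g : W' →ₗ[ℝ] W' →ₗ[ℝ] ℝ) (β : V →ₗ[ℝ] Module.Dual ℝ V)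
    (K : W →ₗ[ℝ] W') (Φ : V →ₗ[ℝ] W') :
    (Module.Dual ℝ V × W × V) →ₗ[ℝ] (Module.Dual ℝ V × W' × V) :=
  letI pη := LinearMap.fst ℝ (Module.Dual ℝ V) (W × V)
  letI pr := (LinearMap.fst ℝ W V).comp (LinearMap.snd ℝ (Module.Dual ℝ V) (W × V))
  letI pX := (LinearMap.snd ℝ W V).comp (LinearMap.snd ℝ (Module.Dual ℝ V) (W × V))
  (pη - (2 : ℝ) • (Φ.dualMap.comp (g.comp (K.comp pr))) + β.comp pX
      - Φ.dualMap.comp (g.comp (Φ.comp pX))).prod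
    ((K.comp pr + Φ.comp pX).prod pX)

/-- The composition of two fiber-preserving isomorphisms of standard Courant
algebroids, determined by data `(β₁, K₁, Φ₁)` and `(β₂, K₂, Φ₂)` (with the `K_i` isometric
isomorphisms of the quadratic Lie algebra bundles and the `β_i` two-forms), is determined by
`(β₃, K₃, Φ₃)` with `K₃ = K₂K₁`, `Φ₃ = Φ₂ + K₂Φ₁` and
`β₃(X,Y) = (β₁+β₂)(X,Y) + ⟨Φ₂X, K₂Φ₁Y⟩ − ⟨Φ₂Y, K₂Φ₁X⟩`. -/
theorem stdCourantMap_comp {V W₁ W₂ W₃ : Type*} [AddCommGroup V] [Module ℝ V]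
    [AddCommGroup W₁] [Module ℝ W₁] [AddCommGroup W₂] [Module ℝ W₂]
    [AddCommGroup W₃] [Module ℝ W₃]
    (g₁ : W₁ →ₗ[ℝ] W₁ →ₗ[ℝ] ℝ) (g₂ : W₂ →ₗ[ℝ] W₂ →ₗ[ℝ] ℝ) (g₃ : W₃ →ₗ[ℝ] W₃ →ₗ[ℝ] ℝ)
    (hg₂symm : ∀ a b, g₂ a b = g₂ b a) (hg₃symm : ∀ a b, g₃ a b = g₃ b a)
    (β₁ β₂ : V →ₗ[ℝ] Module.Dual ℝ V)
    (hβ₁ : ∀ X Y, β₁ X Y = - β₁ Y X) (hβ₂ : ∀ X Y, β₂ X Y = - β₂ Y X)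
    (K₁ : W₁ →ₗ[ℝ] W₂) (K₂ : W₂ →ₗ[ℝ] W₃)
    (hK₁bij : Function.Bijective K₁) (hK₂bij : Function.Bijective K₂)
    (hK₁ : ∀ a b, g₂ (K₁ a) (K₁ b) = g₁ a b) (hK₂ : ∀ a b, g₃ (K₂ a) (K₂ b) = g₂ a b)
    (Φ₁ : V →ₗ[ℝ] W₂) (Φ₂ : V →ₗ[ℝ] W₃) :
    (stdCourantMap g₃ β₂ K₂ Φ₂).comp (stdCourantMap g₂ β₁ K₁ Φ₁)
      = stdCourantMap g₃
          (β₁ + β₂ + (K₂.comp Φ₁).dualMap.comp (g₃.comp Φ₂)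
            - Φ₂.dualMap.comp (g₃.comp (K₂.comp Φ₁)))
          (K₂.comp K₁) (Φ₂ + K₂.comp Φ₁) := by
  apply LinearMap.ext
  rintro ⟨η, r, X⟩
  refine Prod.ext ?_ (Prod.ext ?_ rfl)
  · apply LinearMap.ext; intro Y
    simp only [stdCourantMap, LinearMap.comp_apply, LinearMap.prod_apply, Function.prod,
      LinearMap.add_apply, LinearMap.sub_apply, LinearMap.smul_apply, LinearMap.fst_apply,
      LinearMap.snd_apply, LinearMap.dualMap_apply, LinearMap.map_add, LinearMap.map_sub,
      LinearMap.map_smul, smul_eq_mul]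
    have h1 := hK₂ (K₁ r) (Φ₁ Y)
    have h2 := hK₂ (Φ₁ X) (Φ₁ Y)
    have h3 := hg₃symm (Φ₂ X) (K₂ (Φ₁ Y))
    ring_nf
    linarith
  · simp [stdCourantMap, map_add]
    abel
end
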